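/- Let 1 ≤ p < ∞ and f : ℝ^d × ℝ^m × Ω → ℝ be such that ω ↦ f(x, y(ω), ω) is integrable for every (x,y) ∈ X = ℝ^d × L^p(Ω;ℝ^m). Suppose there exist C > 0, β ∈ L¹(Ω), and a function ρ : [0, +∞) → [0, +∞) with ρ(t) → +∞ as t → +∞, such that f(x,y,ω) ≥ ρ(|x|) + C|y|^p + β(ω) for all (x,y) ∈ ℝ^d × ℝ^m and a.e. ω ∈ Ω. Then for every c ≥ 0, every γ ∈ ℝ and every function φ : X → [0, +∞], the set {(x,y) ∈ X : 𝓘(x,y) + c·φ(x,y) < γ} is bounded in X, where 𝓘(x,y) = ∫_Ω f(x, y(ω), ω) dP(ω). -/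

import Mathlib

open MeasureTheory Filter Set
open scoped ENNReal

/-- **Boundedness of penalty sublevel sets under coercivity.** Let `1 ≤ p < ∞` and let the
integrand satisfy the coercivity condition `f(x,y,ω) ≥ ρ(|x|) + C|y|^p + β(ω)` with
`ρ(t) → +∞` as `t → +∞`. Then for every `c ≥ 0`, every `γ ∈ ℝ` and every penalty term
`φ : X → [0,+∞]`, the sublevel set `{(x,y) ∈ X : 𝓘(x,y) + c·φ(x,y) < γ}` is bounded in
`X = ℝ^d × L^p(Ω;ℝ^m)`. -/
theorem sublevel_bounded_of_coercive
    {d m : ℕ} {Ω : Type*} [MeasurableSpace Ω] (P : Measure Ω) [IsProbabilityMeasure P]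
    (p : ℝ≥0∞) [Fact (1 ≤ p)] (hp : p ≠ ∞)
    (f : EuclideanSpace ℝ (Fin d) → EuclideanSpace ℝ (Fin m) → Ω → ℝ)
    (hint : ∀ (x : EuclideanSpace ℝ (Fin d)) (y : Lp (EuclideanSpace ℝ (Fin m)) p P),
      Integrable (fun ω => f x (y ω) ω) P)
    (C : ℝ) (hC : 0 < C) (β : Ω → ℝ) (hβ : Integrable β P)
    (ρ : ℝ → ℝ) (hρ0 : ∀ t, 0 ≤ t → 0 ≤ ρ t) (hρ : Tendsto ρ atTop atTop)
    (hcoerc : ∀ᵐ ω ∂P, ∀ (x : EuclideanSpace ℝ (Fin d)) (y : EuclideanSpace ℝ (Fin m)),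
      ρ ‖x‖ + C * ‖y‖ ^ p.toReal + β ω ≤ f x y ω)
    (c : ℝ) (hc : 0 ≤ c) (γ : ℝ)
    (φ : EuclideanSpace ℝ (Fin d) × Lp (EuclideanSpace ℝ (Fin m)) p P → ℝ≥0∞) :
    Bornology.IsBounded {z : EuclideanSpace ℝ (Fin d) × Lp (EuclideanSpace ℝ (Fin m)) p P |
      ((∫ ω, f z.1 (z.2 ω) ω ∂P : ℝ) : EReal) + (c : EReal) * ((φ z : ℝ≥0∞) : EReal)
        < (γ : EReal)} := by
  have hp1 : (1 : ℝ≥0∞) ≤ p := Fact.out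
  have hp0 : p ≠ 0 := fun h => by simp [h] at hp1
  have hpt : 0 < p.toReal := ENNReal.toReal_pos hp0 hp
  set B : ℝ := ∫ ω, β ω ∂P with hB
  -- choose R such that ρ t > γ - B for t ≥ R
  obtain ⟨R, hR⟩ : ∃ R, ∀ t ≥ R, γ - B + 1 ≤ ρ t :=
    (hρ.eventually_ge_atTop (γ - B + 1)).exists_forall_of_atTop
  set D : ℝ := max (γ - B) 0 / C with hD
  have hD0 : 0 ≤ D := div_nonneg (le_max_right _ _) hC.le
  set M : ℝ := D ^ p.toReal⁻¹ with hM
  rw [isBounded_iff_forall_norm_le]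
  refine ⟨max (max R 0) M, fun z hz => ?_⟩
  simp only [mem_setOf_eq] at hz
  -- the penalty term is nonnegative
  have hφ0 : (0 : EReal) ≤ (c : EReal) * ((φ z : ℝ≥0∞) : EReal) := by
    apply mul_nonneg
    · exact_mod_cast hc
    · exact EReal.coe_ennreal_nonneg _
  have hIγ : (∫ ω, f z.1 (z.2 ω) ω ∂P) < γ := by
    have : ((∫ ω, f z.1 (z.2 ω) ω ∂P : ℝ) : EReal) < (γ : EReal) :=
      lt_of_le_of_lt (le_add_of_nonneg_right hφ0) hz
    exact_mod_cast this
  -- integrate the coercivity inequality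
  have hmem : MemLp (z.2 : Ω → EuclideanSpace ℝ (Fin m)) p P := Lp.memLp z.2
  have hint2 : Integrable (fun ω => ‖z.2 ω‖ ^ p.toReal) P :=
    hmem.integrable_norm_rpow hp0 hp
  set J : ℝ := ∫ ω, ‖z.2 ω‖ ^ p.toReal ∂P with hJ
  have hJ0 : 0 ≤ J := integral_nonneg fun ω => Real.rpow_nonneg (norm_nonneg _) _
  have hg : Integrable (fun ω => ρ ‖z.1‖ + C * ‖z.2 ω‖ ^ p.toReal + β ω) P :=
    ((integrable_const _).add (hint2.const_mul C)).add hβ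
  have hle : ρ ‖z.1‖ + C * J + B ≤ ∫ ω, f z.1 (z.2 ω) ω ∂P := by
    have := integral_mono_ae hg (hint z.1 z.2)
      (hcoerc.mono fun ω hω => hω z.1 (z.2 ω))
    calc ρ ‖z.1‖ + C * J + B
        = ∫ ω, (ρ ‖z.1‖ + C * ‖z.2 ω‖ ^ p.toReal + β ω) ∂P := by
          rw [integral_add (show Integrable (fun ω => ρ ‖z.1‖ + C * ‖z.2 ω‖ ^ p.toReal) P from
              (integrable_const _).add (hint2.const_mul C)) hβ,
            integral_add (integrable_const _) (hint2.const_mul C),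
            integral_const, integral_const_mul]
          simp
          rfl
      _ ≤ _ := this
  have key : ρ ‖z.1‖ + C * J ≤ γ - B := by linarith
  have hρnn : 0 ≤ ρ ‖z.1‖ := hρ0 _ (norm_nonneg _)
  have hCJnn : 0 ≤ C * J := mul_nonneg hC.le hJ0
  -- bound on the first component
  have hx : ‖z.1‖ ≤ max R 0 := by
    by_contra hcon
    push_neg at hcon
    have := hR ‖z.1‖ (le_of_lt (lt_of_le_of_lt (le_max_left _ _) hcon))
    linarith
  -- bound on the second component
  have hJD : J ≤ D := by
    rw [hD, le_div_iff₀ hC]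
    calc J * C = C * J := mul_comm _ _
      _ ≤ γ - B := by linarith
      _ ≤ max (γ - B) 0 := le_max_left _ _
  have hy : ‖z.2‖ ≤ M := by
    have hnorm : ‖z.2‖ = J ^ p.toReal⁻¹ := by
      rw [Lp.norm_def, hmem.eLpNorm_eq_integral_rpow_norm hp0 hp,
        ENNReal.toReal_ofReal (Real.rpow_nonneg hJ0 _)]
    rw [hnorm, hM]
    exact Real.rpow_le_rpow hJ0 hJD (inv_nonneg.2 hpt.le)
  calc ‖z‖ = max ‖z.1‖ ‖z.2‖ := rfl
    _ ≤ max (max R 0) M := max_le_max hx hy
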